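/- Let C be a real symmetric positive definite 2N×2N matrix. Then Ċ is symmetric positive definite and commutes with J (equivalently, Ċ ∈ 𝒢), while C̈ is symmetric and satisfies J·C̈·Jᵀ = −C̈. -/

import Mathlib

open Matrix

/-- The block matrix `J = [[0, -I],[I, 0]]`. -/
def J (N : ℕ) : Matrix (Fin N ⊕ Fin N) (Fin N ⊕ Fin N) ℝ :=
  Matrix.fromBlocks 0 (-1) 1 0

/-- A real `2N × 2N` matrix has the block form `[[G₁, -G₂],[G₂, G₁]]`. -/
def blockForm {N : ℕ} (G : Matrix (Fin N ⊕ Fin N) (Fin N ⊕ Fin N) ℝ) : Prop :=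
  ∃ G₁ G₂ : Matrix (Fin N) (Fin N) ℝ, G = Matrix.fromBlocks G₁ (-G₂) G₂ G₁

/-- The proper part `Ċ` of a real `2N × 2N` matrix `C` with blocks `[[A, B],[B′, D]]`:
`Ċ = (1/2)·[[A+D, B−B′],[B′−B, A+D]]`. -/
noncomputable def dotPart {N : ℕ} (C : Matrix (Fin N ⊕ Fin N) (Fin N ⊕ Fin N) ℝ) :
    Matrix (Fin N ⊕ Fin N) (Fin N ⊕ Fin N) ℝ :=
  (1/2 : ℝ) • Matrix.fromBlocks (C.toBlocks₁₁ + C.toBlocks₂₂) (C.toBlocks₁₂ - C.toBlocks₂₁)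
    (C.toBlocks₂₁ - C.toBlocks₁₂) (C.toBlocks₁₁ + C.toBlocks₂₂)

/-- The improper part `C̈ = C − Ċ`. -/
noncomputable def ddotPart {N : ℕ} (C : Matrix (Fin N ⊕ Fin N) (Fin N ⊕ Fin N) ℝ) :
    Matrix (Fin N ⊕ Fin N) (Fin N ⊕ Fin N) ℝ :=
  C - dotPart C

lemma myJ_transpose (N : ℕ) : (J N)ᵀ = -(J N) := by
  simp [_root_.J, fromBlocks_transpose, fromBlocks_neg]

lemma myJ_mul_J (N : ℕ) : J N * J N = -1 := by
  simp [_root_.J, fromBlocks_multiply, ← fromBlocks_one, fromBlocks_neg]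

lemma JCJt (N : ℕ) (C : Matrix (Fin N ⊕ Fin N) (Fin N ⊕ Fin N) ℝ) :
    J N * C * (J N)ᵀ = fromBlocks C.toBlocks₂₂ (-C.toBlocks₂₁) (-C.toBlocks₁₂) C.toBlocks₁₁ := by
  nth_rewrite 1 [← fromBlocks_toBlocks C]
  simp [_root_.J, fromBlocks_transpose, fromBlocks_multiply]

lemma dotPart_eq {N : ℕ} (C : Matrix (Fin N ⊕ Fin N) (Fin N ⊕ Fin N) ℝ) :
    dotPart C = (1/2 : ℝ) • (C + J N * C * (J N)ᵀ) := by
  rw [JCJt]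
  nth_rewrite 2 [← fromBlocks_toBlocks C]
  rw [fromBlocks_add]
  unfold dotPart
  refine congrArg _ ?_
  rw [fromBlocks_inj]
  refine ⟨rfl, by abel, by abel, by abel⟩

lemma posDef_smul {n : Type*} [Fintype n] {M : Matrix n n ℝ} (hM : M.PosDef) {c : ℝ}
    (hc : 0 < c) : (c • M).PosDef := by
  refine ⟨?_, fun x hx => ?_⟩
  · unfold Matrix.IsHermitian
    rw [conjTranspose_smul, hM.1]
    simp
  · have := hM.2 hx
    have e : (x.sum fun i xi ↦ x.sum fun j xj ↦ star xi * (c • M) i j * xj) =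
        c * (x.sum fun i xi ↦ x.sum fun j xj ↦ star xi * M i j * xj) := by
      simp only [Matrix.smul_apply, smul_eq_mul, Finsupp.mul_sum]
      congr 1; ext i xi; congr 1; ext j xj; ring
    rw [e]
    positivity

theorem statement1 (N : ℕ) (hN : 1 ≤ N)
    (C : Matrix (Fin N ⊕ Fin N) (Fin N ⊕ Fin N) ℝ) (hC : C.PosDef) :
    (dotPart C).PosDef ∧ (dotPart C)ᵀ = dotPart C ∧
    dotPart C * J N = J N * dotPart C ∧
    (blockForm (dotPart C) ∧ IsUnit (dotPart C)) ∧
    (ddotPart C)ᵀ = ddotPart C ∧ J N * ddotPart C * (J N)ᵀ = -(ddotPart C) := by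
  have hCt : Cᵀ = C := by rw [← conjTranspose_eq_transpose_of_trivial]; exact hC.1
  -- positive definiteness
  have hPD : (dotPart C).PosDef := by
    rw [dotPart_eq]
    refine posDef_smul ?_ (by norm_num)
    refine hC.add_posSemidef ?_
    have := hC.posSemidef.mul_mul_conjTranspose_same (J N)
    simpa [conjTranspose_eq_transpose_of_trivial] using this
  -- symmetry of dotPart
  have hsym : (dotPart C)ᵀ = dotPart C := by
    rw [dotPart_eq, transpose_smul, transpose_add, transpose_mul, transpose_mul,
      transpose_transpose, hCt, Matrix.mul_assoc]
  -- block form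
  have hbf : blockForm (dotPart C) := by
    refine ⟨(1/2 : ℝ) • (C.toBlocks₁₁ + C.toBlocks₂₂),
      (1/2 : ℝ) • (C.toBlocks₂₁ - C.toBlocks₁₂), ?_⟩
    unfold dotPart
    rw [fromBlocks_smul]
    rw [fromBlocks_inj]
    refine ⟨rfl, ?_, rfl, rfl⟩
    rw [smul_sub, smul_sub, neg_sub]
  -- commutation with J
  have hcomm : dotPart C * J N = J N * dotPart C := by
    obtain ⟨G₁, G₂, hG⟩ := hbf
    rw [hG]
    simp [_root_.J, fromBlocks_multiply]
  -- ddotPart transpose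
  have hddt : (ddotPart C)ᵀ = ddotPart C := by
    unfold ddotPart
    rw [transpose_sub, hCt, hsym]
  -- J * ddotPart * Jᵀ = -ddotPart
  have hdd : J N * ddotPart C * (J N)ᵀ = -(ddotPart C) := by
    have hdde : ddotPart C = (1/2 : ℝ) • (C - J N * C * (J N)ᵀ) := by
      unfold ddotPart
      rw [dotPart_eq]
      rw [smul_sub, smul_add]
      module
    rw [hdde, Matrix.mul_smul, Matrix.smul_mul, Matrix.mul_sub, Matrix.sub_mul, ← smul_neg,
      neg_sub]
    congr 1
    have key : J N * (J N * C * (J N)ᵀ) * (J N)ᵀ = C := by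
      rw [myJ_transpose]
      calc J N * (J N * C * -J N) * -J N
          = (J N * J N) * C * ((J N) * (J N)) := by
            simp only [Matrix.mul_neg, Matrix.neg_mul, neg_neg, Matrix.mul_assoc]
        _ = C := by rw [myJ_mul_J]; simp
    rw [key]
  exact ⟨hPD, hsym, hcomm, ⟨hbf, hPD.isUnit⟩, hddt, hdd⟩
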